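/- arXiv:1605.08101 — 12 statements merged into one kernel-verified Lean document; each statement's English description precedes it below -/
import Mathlib

section
/- Let f⋆ ∈ ℝ and c > 0. Let (φ_k)_{k∈ℕ} and (g_k)_{k∈ℕ} be real sequences such that for every k: g_k ≥ 0, φ_k ≥ f⋆, and φ_k − φ_{k+1} ≥ c·g_k². Then: (i) for every K ≥ 1, min_{0 ≤ k < K} g_k ≤ √((φ_0 − f⋆)/c)·(1/√K); (ii) for every ε > 0 there exists k ≤ ⌈(φ_0 − f⋆)/(c·ε²)⌉ with g_k ≤ ε; and (iii) g_k → 0 as k → ∞. -/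
open Filter

theorem stmt0 (fstar c : ℝ) (hc : 0 < c) (φ g : ℕ → ℝ)
    (hg : ∀ k, 0 ≤ g k) (hlb : ∀ k, fstar ≤ φ k)
    (hdec : ∀ k, φ k - φ (k + 1) ≥ c * (g k) ^ 2) :
    (∀ K : ℕ, 1 ≤ K → ∃ k < K, g k ≤ Real.sqrt ((φ 0 - fstar) / c) * (1 / Real.sqrt K)) ∧
    (∀ ε : ℝ, 0 < ε → ∃ k ≤ ⌈(φ 0 - fstar) / (c * ε ^ 2)⌉₊, g k ≤ ε) ∧
    Tendsto g atTop (nhds 0) := by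
  have hsum : ∀ K : ℕ, (∑ k ∈ Finset.range K, c * g k ^ 2) ≤ φ 0 - φ K := by
    intro K
    induction K with
    | zero => simp
    | succ n ih =>
      rw [Finset.sum_range_succ]
      have := hdec n
      linarith
  -- main min bound
  have hmin : ∀ K : ℕ, 1 ≤ K → ∃ k < K, g k ^ 2 ≤ (φ 0 - fstar) / (c * K) := by
    intro K hK
    by_contra h
    push_neg at h
    have hKpos : (0:ℝ) < K := by exact_mod_cast hK
    have hlow : ∑ k ∈ Finset.range K, ((φ 0 - fstar) / K) < ∑ k ∈ Finset.range K, c * g k ^ 2 := by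
      apply Finset.sum_lt_sum_of_nonempty
      · exact Finset.nonempty_range_iff.mpr (by omega)
      · intro i hi
        have := h i (Finset.mem_range.mp hi)
        have h2 : (φ 0 - fstar) / (c * K) < g i ^ 2 := this
        have : (φ 0 - fstar) / K < c * g i ^ 2 := by
          rw [div_lt_iff₀ hKpos] at *
          rw [div_lt_iff₀ (by positivity)] at h2
          nlinarith
        linarith
    rw [Finset.sum_const, Finset.card_range, nsmul_eq_mul,
      mul_div_cancel₀ _ (ne_of_gt hKpos)] at hlow
    have := hsum K
    have := hlb K
    linarith
  have hnn : ∀ K : ℕ, 0 ≤ φ 0 - fstar := fun K => by linarith [hlb 0]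
  have part1 : ∀ K : ℕ, 1 ≤ K → ∃ k < K, g k ≤ Real.sqrt ((φ 0 - fstar) / c) * (1 / Real.sqrt K) := by
    intro K hK
    obtain ⟨k, hkK, hk⟩ := hmin K hK
    refine ⟨k, hkK, ?_⟩
    have hKpos : (0:ℝ) < K := by exact_mod_cast hK
    have : g k ≤ Real.sqrt ((φ 0 - fstar) / (c * K)) := by
      have := Real.sqrt_le_sqrt hk
      rwa [Real.sqrt_sq (hg k)] at this
    refine this.trans (le_of_eq ?_)
    rw [one_div, ← Real.sqrt_inv, ← Real.sqrt_mul (div_nonneg (hnn 0) hc.le)]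
    congr 1
    field_simp
  refine ⟨part1, ?_, ?_⟩
  · intro ε hε
    set N := ⌈(φ 0 - fstar) / (c * ε ^ 2)⌉₊ with hN
    obtain ⟨k, hkK, hk⟩ := hmin (N + 1) (by omega)
    refine ⟨k, by omega, ?_⟩
    have hcN : (φ 0 - fstar) / (c * ε ^ 2) ≤ N := Nat.le_ceil _
    have hNpos : (0:ℝ) < (N:ℝ) + 1 := by positivity
    have h1 : (φ 0 - fstar) / (c * (N + 1)) ≤ ε ^ 2 := by
      rw [div_le_iff₀ (by positivity)]
      rw [div_le_iff₀ (by positivity)] at hcN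
      nlinarith
    have h2 : g k ^ 2 ≤ ε ^ 2 := by
      refine hk.trans ?_
      convert h1 using 3
      push_cast
      rfl
      norm_num
    have := Real.sqrt_le_sqrt h2
    rwa [Real.sqrt_sq (hg k), Real.sqrt_sq hε.le] at this
  · -- φ is antitone and bounded below, so converges
    have hanti : Antitone φ := antitone_nat_of_succ_le fun n => by
      have := hdec n
      nlinarith [hg n, sq_nonneg (g n)]
    have hbdd : BddBelow (Set.range φ) := ⟨fstar, fun x ⟨n, hn⟩ => hn ▸ hlb n⟩
    have hφ : Tendsto φ atTop (nhds (⨅ n, φ n)) :=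
      tendsto_atTop_ciInf hanti hbdd
    have hφ' : Tendsto (fun n => φ (n + 1)) atTop (nhds (⨅ n, φ n)) :=
      hφ.comp (tendsto_add_atTop_nat 1)
    have hdiff : Tendsto (fun n => φ n - φ (n + 1)) atTop (nhds 0) := by
      have := hφ.sub hφ'
      simpa using this
    have hub : ∀ n, g n ^ 2 ≤ (φ n - φ (n + 1)) / c :=
      fun n => (le_div_iff₀ hc).mpr (by linarith [hdec n])
    have hsq : Tendsto (fun n => g n ^ 2) atTop (nhds 0) :=
      squeeze_zero (fun n => sq_nonneg (g n)) hub (by simpa using hdiff.div_const c)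
    have := hsq.sqrt
    simp only [Real.sqrt_zero] at this
    refine this.congr fun n => Real.sqrt_sq (hg n)
end

section
/- Let E be a real inner product space, f : E → ℝ, x, g, η⁰ ∈ E, and constants L > 0, c₁ ∈ (0,1), t̄ > 0, τ ∈ (0,1), c₂ ∈ (0,1], and 0 < c₃ ≤ c₄. Assume: |f(x + η) − f(x) − ⟪g, η⟫| ≤ (L/2)‖η‖² for all η ∈ E; ⟪−g, η⁰⟫ ≥ c₂‖g‖‖η⁰‖; and c₃‖g‖ ≤ ‖η⁰‖ ≤ c₄‖g‖. Then there is a least natural number i such that t := t̄·τ^i satisfies f(x) − f(x + t·η⁰) ≥ c₁ t ⟪−g, η⁰⟫, and this least i satisfies: (a) f(x) − f(x + t·η⁰) ≥ c₁ c₂ c₃ t ‖g‖²; (b) t ≥ min(t̄, 2τc₂(1 − c₁)/(c₄ L)); and (c) 1 + i ≤ max(1, 2 + ⌈log_{1/τ}(c₄ t̄ L/(2 c₂ (1 − c₁)))⌉). -/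
open RealInnerProductSpace

set_option maxHeartbeats 1000000 in
theorem stmt3 {E : Type*} [NormedAddCommGroup E] [InnerProductSpace ℝ E]
    (f : E → ℝ) (x g η₀ : E)
    (L c₁ tbar τ c₂ c₃ c₄ : ℝ)
    (hL : 0 < L) (hc₁ : c₁ ∈ Set.Ioo (0 : ℝ) 1) (htbar : 0 < tbar)
    (hτ : τ ∈ Set.Ioo (0 : ℝ) 1) (hc₂ : c₂ ∈ Set.Ioc (0 : ℝ) 1)
    (hc₃ : 0 < c₃) (hc₃₄ : c₃ ≤ c₄)
    (hlip : ∀ η : E, |f (x + η) - f x - ⟪g, η⟫| ≤ L / 2 * ‖η‖ ^ 2)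
    (hangle : ⟪-g, η₀⟫ ≥ c₂ * ‖g‖ * ‖η₀‖)
    (hlen₁ : c₃ * ‖g‖ ≤ ‖η₀‖) (hlen₂ : ‖η₀‖ ≤ c₄ * ‖g‖) :
    ∃ i : ℕ,
      (f x - f (x + (tbar * τ ^ i) • η₀) ≥ c₁ * (tbar * τ ^ i) * ⟪-g, η₀⟫) ∧
      (∀ j < i, ¬ (f x - f (x + (tbar * τ ^ j) • η₀) ≥ c₁ * (tbar * τ ^ j) * ⟪-g, η₀⟫)) ∧
      (f x - f (x + (tbar * τ ^ i) • η₀) ≥ c₁ * c₂ * c₃ * (tbar * τ ^ i) * ‖g‖ ^ 2) ∧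
      (tbar * τ ^ i ≥ min tbar (2 * τ * c₂ * (1 - c₁) / (c₄ * L))) ∧
      ((1 + i : ℤ) ≤ max 1 (2 + ⌈Real.logb τ⁻¹ (c₄ * tbar * L / (2 * c₂ * (1 - c₁)))⌉)) := by
  classical
  obtain ⟨hc₁0, hc₁1⟩ := hc₁
  obtain ⟨hτ0, hτ1⟩ := hτ
  obtain ⟨hc₂0, hc₂1⟩ := hc₂
  have hc₄ : 0 < c₄ := lt_of_lt_of_le hc₃ hc₃₄
  by_cases hη : η₀ = 0
  · have hg0 : g = 0 := by
      have h1 : c₃ * ‖g‖ ≤ 0 := by simpa [hη] using hlen₁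
      have h2 : ‖g‖ ≤ 0 := by nlinarith [norm_nonneg g]
      simpa using le_antisymm h2 (norm_nonneg g)
    refine ⟨0, by simp [hη, hg0], by omega, by simp [hη, hg0], ?_, ?_⟩
    · simpa using min_le_left tbar (2 * τ * c₂ * (1 - c₁) / (c₄ * L))
    · simpa using le_max_left (1:ℤ) _
  -- main case
  have hη' : 0 < ‖η₀‖ := norm_pos_iff.mpr hη
  have hg' : 0 < ‖g‖ := by nlinarith
  have hipos : 0 < ⟪-g, η₀⟫ := lt_of_lt_of_le (by positivity) hangle
  have key : ∀ t : ℝ, 0 < t → L * t * ‖η₀‖ ^ 2 ≤ 2 * (1 - c₁) * ⟪-g, η₀⟫ →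
      f x - f (x + t • η₀) ≥ c₁ * t * ⟪-g, η₀⟫ := by
    intro t ht hcond
    have h1 := hlip (t • η₀)
    rw [norm_smul, real_inner_smul_right] at h1
    have hip : ⟪-g, η₀⟫ = - ⟪g, η₀⟫ := inner_neg_left g η₀
    rw [Real.norm_eq_abs, abs_of_pos ht] at h1
    have h2 := (abs_le.mp h1).2
    rw [hip] at hcond ⊢
    nlinarith [mul_le_mul_of_nonneg_left hcond ht.le]
  have hex : ∃ i : ℕ,
      f x - f (x + (tbar * τ ^ i) • η₀) ≥ c₁ * (tbar * τ ^ i) * ⟪-g, η₀⟫ := by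
    have hB : (0:ℝ) < L * tbar * ‖η₀‖ ^ 2 := by positivity
    have hD : (0:ℝ) < 2 * (1 - c₁) * ⟪-g, η₀⟫ / (L * tbar * ‖η₀‖ ^ 2) :=
      div_pos (by nlinarith) hB
    obtain ⟨n, hn⟩ := exists_pow_lt_of_lt_one hD hτ1
    refine ⟨n, key _ (mul_pos htbar (pow_pos hτ0 n)) ?_⟩
    have h3 := (lt_div_iff₀ hB).mp hn
    nlinarith
  have hcrit : ∀ n : ℕ, Nat.find hex = n + 1 →
      2 * (1 - c₁) * c₂ < c₄ * L * (tbar * τ ^ n) := by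
    intro n hn
    have hnot := Nat.find_min hex (show n < Nat.find hex by omega)
    have ht' : 0 < tbar * τ ^ n := mul_pos htbar (pow_pos hτ0 n)
    have hlt : 2 * (1 - c₁) * ⟪-g, η₀⟫ < L * (tbar * τ ^ n) * ‖η₀‖ ^ 2 := by
      by_contra hle
      exact hnot (key _ ht' (le_of_not_gt hle))
    have h5 : 2 * (1 - c₁) * c₂ * ‖g‖ < L * (tbar * τ ^ n) * ‖η₀‖ := by
      have h4' : (2 * (1 - c₁) * c₂ * ‖g‖) * ‖η₀‖ <
          (L * (tbar * τ ^ n) * ‖η₀‖) * ‖η₀‖ := by nlinarith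
      exact (mul_lt_mul_iff_left₀ hη').mp h4'
    have h6 := mul_le_mul_of_nonneg_left hlen₂
      (show (0:ℝ) ≤ L * (tbar * τ ^ n) by positivity)
    have h7 : (2 * (1 - c₁) * c₂) * ‖g‖ < (c₄ * L * (tbar * τ ^ n)) * ‖g‖ := by
      nlinarith
    exact (mul_lt_mul_iff_left₀ hg').mp h7
  have hfind := Nat.find_spec hex
  have htI : 0 < tbar * τ ^ Nat.find hex := mul_pos htbar (pow_pos hτ0 _)
  refine ⟨Nat.find hex, hfind, fun j hj => Nat.find_min hex hj, ?_, ?_, ?_⟩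
  · -- (a)
    have h1 := mul_le_mul_of_nonneg_left hangle (mul_pos hc₁0 htI).le
    have h2 := mul_le_mul_of_nonneg_left hlen₁
      (show (0:ℝ) ≤ c₁ * (tbar * τ ^ Nat.find hex) * c₂ * ‖g‖ by positivity)
    nlinarith [hfind]
  · -- (b) step size lower bound
    rcases Nat.eq_zero_or_pos (Nat.find hex) with h0 | hpos
    · rw [h0]
      simpa using min_le_left tbar (2 * τ * c₂ * (1 - c₁) / (c₄ * L))
    · obtain ⟨n, hn⟩ := Nat.exists_eq_succ_of_ne_zero hpos.ne'
      have h3 := hcrit n hn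
      rw [hn, pow_succ]
      refine le_trans (min_le_right _ _) ?_
      rw [div_le_iff₀ (by positivity)]
      nlinarith [mul_lt_mul_of_pos_left h3 hτ0]
  · -- (c) iteration count
    rcases Nat.eq_zero_or_pos (Nat.find hex) with h0 | hpos
    · rw [h0]
      simpa using le_max_left (1:ℤ) _
    · obtain ⟨n, hn⟩ := Nat.exists_eq_succ_of_ne_zero hpos.ne'
      have h3 := hcrit n hn
      have hτn : (0:ℝ) < τ ^ n := pow_pos hτ0 n
      have h2c : (0:ℝ) < 2 * c₂ * (1 - c₁) := mul_pos (by linarith) (by linarith)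
      have h8 : 2 * c₂ * (1 - c₁) / (c₄ * L * tbar) < τ ^ n := by
        rw [div_lt_iff₀ (by positivity)]
        linarith [h3]
      have hB : (0:ℝ) < 2 * c₂ * (1 - c₁) / (c₄ * L * tbar) :=
        div_pos h2c (by positivity)
      have h9 : (τ⁻¹) ^ n < c₄ * tbar * L / (2 * c₂ * (1 - c₁)) := by
        rw [inv_pow]
        calc (τ ^ n)⁻¹ < (2 * c₂ * (1 - c₁) / (c₄ * L * tbar))⁻¹ :=
              (inv_lt_inv₀ hτn hB).mpr h8
          _ = c₄ * tbar * L / (2 * c₂ * (1 - c₁)) := by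
              rw [inv_div]; ring
      have hτinv : 1 < τ⁻¹ := (one_lt_inv₀ hτ0).mpr hτ1
      have hlog : (n : ℝ) < Real.logb τ⁻¹ (c₄ * tbar * L / (2 * c₂ * (1 - c₁))) := by
        have h10 := Real.logb_lt_logb hτinv (pow_pos (by positivity) n) h9
        rwa [Real.logb_pow, Real.logb_self_eq_one hτinv, mul_one] at h10
      have h11 : (n : ℤ) < ⌈Real.logb τ⁻¹ (c₄ * tbar * L / (2 * c₂ * (1 - c₁)))⌉ :=
        Int.lt_ceil.mpr (by exact_mod_cast hlog)
      refine le_trans ?_ (le_max_right _ _)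
      rw [hn]
      push_cast
      linarith
end

section
/- Let E be a real Hilbert space and f : E → ℝ differentiable with gradient ∇f. Assume there are f⋆ ∈ ℝ and L > 0 with f(x) ≥ f⋆ for all x and |f(x + η) − f(x) − ⟪∇f(x), η⟫| ≤ (L/2)‖η‖² for all x, η ∈ E. Fix c₁ ∈ (0,1), τ ∈ (0,1), t̄ > 0 and x_0 ∈ E, and define iterates x_{k+1} = x_k − t_k ∇f(x_k), where t_k = t̄·τ^{i_k} and i_k is the least natural number i such that f(x_k) − f(x_k − t̄ τ^i ∇f(x_k)) ≥ c₁ t̄ τ^i ‖∇f(x_k)‖². Then for every ε > 0 there exists k ≤ ⌈(f(x_0) − f⋆)/(c₁ · min(t̄, 2τ(1 − c₁)/L) · ε²)⌉ with ‖∇f(x_k)‖ ≤ ε and f(x_k) ≤ f(x_0). -/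
open RealInnerProductSpace

theorem stmt4 {E : Type*} [NormedAddCommGroup E] [InnerProductSpace ℝ E] [CompleteSpace E]
    (f : E → ℝ) (G : E → E) (hgrad : ∀ x, HasGradientAt f (G x) x)
    (fstar L c₁ τ tbar : ℝ) (hL : 0 < L)
    (hlb : ∀ x, fstar ≤ f x)
    (hlip : ∀ x η : E, |f (x + η) - f x - ⟪G x, η⟫| ≤ L / 2 * ‖η‖ ^ 2)
    (hc₁ : c₁ ∈ Set.Ioo (0 : ℝ) 1) (hτ : τ ∈ Set.Ioo (0 : ℝ) 1) (htbar : 0 < tbar)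
    (x₀ : E) (x : ℕ → E) (i : ℕ → ℕ) (hx0 : x 0 = x₀)
    (hmin : ∀ k,
      (f (x k) - f (x k - (tbar * τ ^ (i k)) • G (x k)) ≥
        c₁ * (tbar * τ ^ (i k)) * ‖G (x k)‖ ^ 2) ∧
      (∀ j < i k, ¬ (f (x k) - f (x k - (tbar * τ ^ j) • G (x k)) ≥
        c₁ * (tbar * τ ^ j) * ‖G (x k)‖ ^ 2)))
    (hiter : ∀ k, x (k + 1) = x k - (tbar * τ ^ (i k)) • G (x k)) :
    ∀ ε : ℝ, 0 < ε →
      ∃ k ≤ ⌈(f x₀ - fstar) / (c₁ * min tbar (2 * τ * (1 - c₁) / L) * ε ^ 2)⌉₊,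
        ‖G (x k)‖ ≤ ε ∧ f (x k) ≤ f x₀ := by
  intro ε hε
  obtain ⟨hc₁0, hc₁1⟩ := hc₁
  obtain ⟨hτ0, hτ1⟩ := hτ
  have htpos : ∀ k, 0 < tbar * τ ^ (i k) := fun k => mul_pos htbar (pow_pos hτ0 _)
  have harm : ∀ k, f (x k) - f (x (k+1)) ≥ c₁ * (tbar * τ ^ (i k)) * ‖G (x k)‖ ^ 2 := by
    intro k; rw [hiter k]; exact (hmin k).1
  have hdec : ∀ k, f (x (k+1)) ≤ f (x k) := by
    intro k
    have h := harm k
    have h0 : 0 ≤ c₁ * (tbar * τ ^ (i k)) * ‖G (x k)‖ ^ 2 :=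
      mul_nonneg (mul_nonneg hc₁0.le (htpos k).le) (sq_nonneg _)
    linarith
  have hle : ∀ k, f (x k) ≤ f x₀ := by
    intro k
    induction k with
    | zero => rw [hx0]
    | succ n ih => exact (hdec n).trans ih
  set tmin := min tbar (2 * τ * (1 - c₁) / L) with htmin
  have htminpos : 0 < tmin :=
    lt_min htbar (div_pos (by nlinarith) hL)
  have hstep : ∀ k, G (x k) ≠ 0 → tmin ≤ tbar * τ ^ (i k) := by
    intro k hgk
    rcases Nat.eq_zero_or_pos (i k) with h0 | hpos
    · rw [h0, pow_zero, mul_one]; exact min_le_left _ _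
    · obtain ⟨j, hj⟩ := Nat.exists_eq_succ_of_ne_zero hpos.ne'
      have hfail := (hmin k).2 j (by omega)
      set s := tbar * τ ^ j with hs
      have hs0 : 0 < s := mul_pos htbar (pow_pos hτ0 _)
      have hlip' := hlip (x k) (-(s • G (x k)))
      have hin : ⟪G (x k), -(s • G (x k))⟫ = -(s * ‖G (x k)‖ ^ 2) := by
        rw [inner_neg_right, real_inner_smul_right, real_inner_self_eq_norm_sq]
      have hnorm : ‖-(s • G (x k))‖ ^ 2 = s ^ 2 * ‖G (x k)‖ ^ 2 := by
        rw [norm_neg, norm_smul, Real.norm_eq_abs, abs_of_pos hs0, mul_pow]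
      have hxeq : x k + -(s • G (x k)) = x k - s • G (x k) := by
        rw [sub_eq_add_neg]
      rw [hxeq, hin, hnorm] at hlip'
      push_neg at hfail
      have habs := abs_le.mp hlip'
      have hg2 : 0 < ‖G (x k)‖ ^ 2 := pow_pos (norm_pos_iff.mpr hgk) 2
      have key : 2 * (1 - c₁) / L < s := by
        rw [div_lt_iff₀ hL]
        nlinarith [habs.1, habs.2]
      have hteq : tbar * τ ^ (i k) = τ * s := by
        rw [hj, hs, pow_succ]; ring
      rw [hteq]
      calc tmin ≤ 2 * τ * (1 - c₁) / L := min_le_right _ _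
        _ = τ * (2 * (1 - c₁) / L) := by ring
        _ ≤ τ * s := by nlinarith
  set D := c₁ * tmin * ε ^ 2 with hD
  have hDpos : 0 < D := by
    apply mul_pos (mul_pos hc₁0 htminpos); positivity
  set K := ⌈(f x₀ - fstar) / D⌉₊ with hK
  by_contra hcon
  push_neg at hcon
  have hgbig : ∀ k ≤ K, ε < ‖G (x k)‖ := by
    intro k hk
    by_contra h
    push_neg at h
    exact absurd (hle k) (hcon k hk h).not_ge
  have hstepD : ∀ k ≤ K, D ≤ f (x k) - f (x (k+1)) := by
    intro k hk
    have hε' := hgbig k hk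
    have hne : G (x k) ≠ 0 := by
      intro h; rw [h, norm_zero] at hε'; linarith
    have h1 := hstep k hne
    have h2 := harm k
    have h3 : ε ^ 2 ≤ ‖G (x k)‖ ^ 2 := by nlinarith [norm_nonneg (G (x k))]
    have h4 : c₁ * tmin * ε ^ 2 ≤ c₁ * (tbar * τ ^ (i k)) * ‖G (x k)‖ ^ 2 := by
      nlinarith [mul_nonneg (mul_nonneg hc₁0.le (htpos k).le) (sub_nonneg.mpr h3),
        mul_nonneg (mul_nonneg hc₁0.le (sub_nonneg.mpr h1)) (sq_nonneg ε)]
    rw [hD]; linarith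
  have hsum : ∀ n, n ≤ K + 1 → (n : ℝ) * D ≤ f x₀ - f (x n) := by
    intro n hn
    induction n with
    | zero => simp [hx0]
    | succ m ih =>
      have h1 := ih (by omega)
      have h2 := hstepD m (by omega)
      push_cast
      linarith
  have h1 := hsum (K+1) le_rfl
  have h2 := hlb (x (K+1))
  have h3 : (K : ℝ) + 1 ≤ (f x₀ - fstar) / D := by
    rw [le_div_iff₀ hDpos]
    push_cast at h1 ⊢
    linarith
  have h4 := Nat.le_ceil ((f x₀ - fstar) / D)
  rw [← hK] at h4
  linarith
end

section
/- Let E be a real inner product space, g ∈ E with g ≠ 0, Δ > 0 and c₀ > 0. Let H : E → E be positively homogeneous (H(αη) = α·H(η) for all α ≥ 0 and η ∈ E) and satisfy ⟪η, H(η)⟫ ≤ c₀‖η‖² for all η ∈ E. Define the model m(η) = ⟪η, g⟫ + (1/2)⟪η, H(η)⟫, set κ = ⟪−g, H(−g)⟫, and define the Cauchy step η^C = −α^C·g where α^C = min(‖g‖²/κ, Δ/‖g‖) if κ > 0 and α^C = Δ/‖g‖ otherwise. Then ‖η^C‖ ≤ Δ and m(0) − m(η^C) ≥ (1/2)·min(Δ,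 ‖g‖/c₀)·‖g‖. -/
open RealInnerProductSpace

set_option maxHeartbeats 1000000

theorem stmt7 {E : Type*} [NormedAddCommGroup E] [InnerProductSpace ℝ E]
    (g : E) (hg : g ≠ 0) (Δ c₀ : ℝ) (hΔ : 0 < Δ) (hc₀ : 0 < c₀)
    (H : E → E)
    (hhom : ∀ (α : ℝ), 0 ≤ α → ∀ η : E, H (α • η) = α • H η)
    (hbound : ∀ η : E, ⟪η, H η⟫ ≤ c₀ * ‖η‖ ^ 2)
    (m : E → ℝ) (hm : ∀ η, m η = ⟪η, g⟫ + 1 / 2 * ⟪η, H η⟫)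
    (κ : ℝ) (hκ : κ = ⟪-g, H (-g)⟫)
    (αC : ℝ) (hαC : αC = if 0 < κ then min (‖g‖ ^ 2 / κ) (Δ / ‖g‖) else Δ / ‖g‖)
    (ηC : E) (hηC : ηC = -(αC • g)) :
    ‖ηC‖ ≤ Δ ∧ m 0 - m ηC ≥ 1 / 2 * min Δ (‖g‖ / c₀) * ‖g‖ := by
  set n := ‖g‖ with hn
  have hn0 : 0 < n := norm_pos_iff.mpr hg
  have hη' : ηC = αC • (-g) := by rw [hηC, smul_neg]
  have hα0 : 0 ≤ αC := by
    rw [hαC]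
    split_ifs with h
    · exact le_min (le_of_lt (div_pos (by positivity) h)) (le_of_lt (div_pos hΔ hn0))
    · exact le_of_lt (div_pos hΔ hn0)
  have hκle : κ ≤ c₀ * n ^ 2 := by
    rw [hκ]
    simpa [norm_neg] using hbound (-g)
  have hHη : H ηC = αC • H (-g) := by rw [hη', hhom αC hα0]
  have hinner1 : ⟪ηC, g⟫ = -(αC * n ^ 2) := by
    rw [hη', real_inner_smul_left, inner_neg_left, real_inner_self_eq_norm_sq]
    ring
  have hinner2 : ⟪ηC, H ηC⟫ = αC ^ 2 * κ := by
    rw [hHη, hη', real_inner_smul_left, real_inner_smul_right, hκ]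
    ring
  have hm0 : m 0 = 0 := by rw [hm]; simp
  have hdec : m 0 - m ηC = αC * n ^ 2 - 1 / 2 * αC ^ 2 * κ := by
    rw [hm0, hm, hinner1, hinner2]; ring
  have hnorm : ‖ηC‖ = αC * n := by
    rw [hη', norm_smul, norm_neg, Real.norm_eq_abs, abs_of_nonneg hα0]
  have hminle : min Δ (n / c₀) * n ≤ Δ * n := by
    have h := min_le_left Δ (n / c₀)
    nlinarith
  have hmin : min Δ (n / c₀) * n ≤ 2 * (αC * n ^ 2 - 1 / 2 * αC ^ 2 * κ) ∧ αC * n ≤ Δ := by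
    rw [hαC]
    split_ifs with h
    · rcases le_total (n ^ 2 / κ) (Δ / n) with hle | hle
      · rw [min_eq_left hle]
        have h1 : 2 * (n ^ 2 / κ * n ^ 2 - 1 / 2 * (n ^ 2 / κ) ^ 2 * κ) = n ^ 4 / κ := by
          field_simp; ring
        constructor
        · rw [h1]
          have h2 : n ^ 2 / c₀ ≤ n ^ 4 / κ := by
            rw [div_le_div_iff₀ hc₀ h]
            nlinarith [sq_nonneg n]
          have h3 : min Δ (n / c₀) * n ≤ n ^ 2 / c₀ := by
            have := min_le_right Δ (n / c₀)
            have h4 : (n / c₀) * n = n ^ 2 / c₀ := by ring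
            nlinarith
          linarith
        · calc n ^ 2 / κ * n ≤ Δ / n * n := by nlinarith
            _ = Δ := by field_simp
      · rw [min_eq_right hle]
        have ht0 : 0 < Δ / n := div_pos hΔ hn0
        have htn : Δ / n * n = Δ := div_mul_cancel₀ _ (ne_of_gt hn0)
        have hκΔ : Δ / n * κ ≤ n ^ 2 := by
          rw [div_le_div_iff₀ hn0 h] at hle
          rw [div_mul_eq_mul_div, div_le_iff₀ hn0]; exact hle
        refine ⟨?_, le_of_eq htn⟩
        have h5 : (Δ / n) ^ 2 * κ ≤ (Δ / n) * n ^ 2 := by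
          have := mul_le_mul_of_nonneg_left hκΔ (le_of_lt ht0)
          nlinarith
        have h6 : Δ / n * n ^ 2 = Δ * n := by
          rw [pow_two, ← mul_assoc, htn]
        nlinarith
    · push_neg at h
      have htn : Δ / n * n = Δ := div_mul_cancel₀ _ (ne_of_gt hn0)
      refine ⟨?_, le_of_eq htn⟩
      have h1 : (Δ / n) ^ 2 * κ ≤ 0 := mul_nonpos_of_nonneg_of_nonpos (sq_nonneg _) h
      have h6 : Δ / n * n ^ 2 = Δ * n := by
        rw [pow_two, ← mul_assoc, htn]
      nlinarith
  refine ⟨by rw [hnorm]; exact hmin.2, ?_⟩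
  rw [hdec]
  have := hmin.1
  nlinarith
end

section
/- Let E be a finite-dimensional real inner product space, g ∈ E, Δ > 0, ε_H > 0, and let H : E → E be a symmetric linear map (⟪H u, v⟫ = ⟪u, H v⟫ for all u, v) whose least eigenvalue is smaller than −ε_H, i.e., there exists w ≠ 0 with ⟪w, H w⟫ < −ε_H‖w‖². Then there exists u ∈ E with ‖u‖ = 1, ⟪u, g⟫ ≤ 0 and ⟪u, H u⟫ < −ε_H; moreover, for the eigenstep η^E = Δ·u, the model m(η) = ⟪η, g⟫ + (1/2)⟪η, H(η)⟫ satisfies m(0) − m(η^E) ≥ (1/2)·Δ²·ε_H. -/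
open RealInnerProductSpace

theorem stmt8 {E : Type*} [NormedAddCommGroup E] [InnerProductSpace ℝ E]
    [FiniteDimensional ℝ E]
    (g : E) (Δ εH : ℝ) (hΔ : 0 < Δ) (hεH : 0 < εH)
    (H : E →ₗ[ℝ] E) (hsym : ∀ u v : E, ⟪H u, v⟫ = ⟪u, H v⟫)
    (hneg : ∃ w : E, w ≠ 0 ∧ ⟪w, H w⟫ < -εH * ‖w‖ ^ 2)
    (m : E → ℝ) (hm : ∀ η, m η = ⟪η, g⟫ + 1 / 2 * ⟪η, H η⟫) :
    ∃ u : E, ‖u‖ = 1 ∧ ⟪u, g⟫ ≤ 0 ∧ ⟪u, H u⟫ < -εH ∧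
      m 0 - m (Δ • u) ≥ 1 / 2 * Δ ^ 2 * εH := by
  obtain ⟨w, hw, hwH⟩ := hneg
  have hwn : (0:ℝ) < ‖w‖ := norm_pos_iff.mpr hw
  set v : E := (‖w‖)⁻¹ • w with hv
  have hvn : ‖v‖ = 1 := by
    simp [hv, norm_smul, abs_of_nonneg (inv_nonneg.mpr hwn.le), inv_mul_cancel₀ hwn.ne']
  have hvH : ⟪v, H v⟫ < -εH := by
    have : ⟪v, H v⟫ = (‖w‖)⁻¹ * (‖w‖)⁻¹ * ⟪w, H w⟫ := by
      simp [hv, real_inner_smul_left, inner_smul_right]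
      ring
    rw [this]
    have h2 : (‖w‖)⁻¹ * (‖w‖)⁻¹ * ⟪w, H w⟫ < (‖w‖)⁻¹ * (‖w‖)⁻¹ * (-εH * ‖w‖ ^ 2) := by
      apply mul_lt_mul_of_pos_left hwH
      positivity
    calc (‖w‖)⁻¹ * (‖w‖)⁻¹ * ⟪w, H w⟫ < (‖w‖)⁻¹ * (‖w‖)⁻¹ * (-εH * ‖w‖ ^ 2) := h2
      _ = -εH := by field_simp
  set u : E := if ⟪v, g⟫ ≤ 0 then v else -v with hu
  have hun : ‖u‖ = 1 := by
    rw [hu]; split <;> simp [hvn]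
  have hug : ⟪u, g⟫ ≤ 0 := by
    rw [hu]; split
    · assumption
    · rw [inner_neg_left]; linarith
  have huH : ⟪u, H u⟫ < -εH := by
    rw [hu]; split <;> simp [inner_neg_left, inner_neg_right, hvH]
  refine ⟨u, hun, hug, huH, ?_⟩
  rw [hm, hm]
  simp only [inner_zero_left, map_zero, inner_zero_right, map_smul,
    real_inner_smul_left, real_inner_smul_right]
  nlinarith [sq_nonneg Δ, mul_nonpos_of_nonneg_of_nonpos hΔ.le hug,
    mul_lt_mul_of_pos_left huH (by positivity : (0:ℝ) < Δ^2)]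
end

section
/- Let E be a real inner product space, f̂ : E → ℝ, g, η ∈ E, H : E → E, and constants L_g ≥ 0, c₀ > 0, c₂ > 0, ε_g > 0, Δ > 0. Set λ_g = (1/4)·min(1/c₀, c₂/(L_g + c₀)) and m(ξ) = f̂(0) + ⟪ξ, g⟫ + (1/2)⟪ξ, H(ξ)⟫. Assume: ‖η‖ ≤ Δ ≤ 4λ_g ε_g; |f̂(η) − f̂(0) − ⟪η, g⟫| ≤ (L_g/2)‖η‖²; |⟪η, H(η)⟫| ≤ c₀‖η‖²; and m(0) − m(η) ≥ c₂·min(Δ, ε_g/c₀)·ε_g. Then the ratio ρ = (f̂(0) − f̂(η))/(m(0) − m(η)) satisfies |ρ − 1| ≤ 1/2; in particular ρ ≥ 1/2. -/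
open RealInnerProductSpace

theorem stmt9 {E : Type*} [NormedAddCommGroup E] [InnerProductSpace ℝ E]
    (fhat : E → ℝ) (g η : E) (H : E → E)
    (Lg c₀ c₂ εg Δ : ℝ)
    (hLg : 0 ≤ Lg) (hc₀ : 0 < c₀) (hc₂ : 0 < c₂) (hεg : 0 < εg) (hΔ : 0 < Δ)
    (lamg : ℝ) (hlamg : lamg = 1 / 4 * min (1 / c₀) (c₂ / (Lg + c₀)))
    (m : E → ℝ) (hm : ∀ ξ, m ξ = fhat 0 + ⟪ξ, g⟫ + 1 / 2 * ⟪ξ, H ξ⟫)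
    (hηΔ : ‖η‖ ≤ Δ) (hΔsmall : Δ ≤ 4 * lamg * εg)
    (hlip : |fhat η - fhat 0 - ⟪η, g⟫| ≤ Lg / 2 * ‖η‖ ^ 2)
    (hH : |⟪η, H η⟫| ≤ c₀ * ‖η‖ ^ 2)
    (hdec : m 0 - m η ≥ c₂ * min Δ (εg / c₀) * εg) :
    |(fhat 0 - fhat η) / (m 0 - m η) - 1| ≤ 1 / 2 ∧
      (fhat 0 - fhat η) / (m 0 - m η) ≥ 1 / 2 := by

  have hLc : 0 < Lg + c₀ := by linarith
  -- D positive
  have hminpos : 0 < min Δ (εg / c₀) := lt_min hΔ (div_pos hεg hc₀)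
  have hDpos : 0 < m 0 - m η := lt_of_lt_of_le (by positivity) hdec
  set D := m 0 - m η with hDdef
  -- express D
  have hm0 : m 0 = fhat 0 := by simp [hm]
  have hDform : D = -(⟪η, g⟫ + 1 / 2 * ⟪η, H η⟫) := by
    rw [hDdef, hm0, hm]; ring
  -- numerator bound
  have hN : |fhat 0 - fhat η - D| ≤ (Lg + c₀) / 2 * ‖η‖ ^ 2 := by
    have heq : fhat 0 - fhat η - D
        = -(fhat η - fhat 0 - ⟪η, g⟫) + 1 / 2 * ⟪η, H η⟫ := by
      rw [hDform]; ring
    rw [heq]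
    calc |-(fhat η - fhat 0 - ⟪η, g⟫) + 1 / 2 * ⟪η, H η⟫|
        ≤ |-(fhat η - fhat 0 - ⟪η, g⟫)| + |1 / 2 * ⟪η, H η⟫| := abs_add_le _ _
      _ ≤ Lg / 2 * ‖η‖ ^ 2 + 1 / 2 * (c₀ * ‖η‖ ^ 2) := by
          rw [abs_neg, abs_mul]
          have : |(1:ℝ)/2| = 1/2 := by norm_num
          rw [this]
          gcongr
      _ = (Lg + c₀) / 2 * ‖η‖ ^ 2 := by ring
  -- Δ bounds
  have hΔm : Δ ≤ min (1 / c₀) (c₂ / (Lg + c₀)) * εg := by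
    rw [hlamg] at hΔsmall; linarith [hΔsmall]
  have h1 : Δ ≤ εg / c₀ := by
    have := min_le_left (1 / c₀) (c₂ / (Lg + c₀))
    calc Δ ≤ min (1 / c₀) (c₂ / (Lg + c₀)) * εg := hΔm
      _ ≤ (1 / c₀) * εg := by gcongr
      _ = εg / c₀ := by ring
  have h2 : (Lg + c₀) * Δ ≤ c₂ * εg := by
    have hΔ2 : Δ ≤ c₂ / (Lg + c₀) * εg := by
      have := min_le_right (1 / c₀) (c₂ / (Lg + c₀))
      calc Δ ≤ min (1 / c₀) (c₂ / (Lg + c₀)) * εg := hΔm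
        _ ≤ c₂ / (Lg + c₀) * εg := by gcongr
    have h3 := mul_le_mul_of_nonneg_left hΔ2 hLc.le
    have h4 : (Lg + c₀) * (c₂ / (Lg + c₀) * εg) = c₂ * εg := by
      field_simp
    linarith
  have hmin : min Δ (εg / c₀) = Δ := min_eq_left h1
  have hkey : (Lg + c₀) / 2 * ‖η‖ ^ 2 ≤ 1 / 2 * D := by
    calc (Lg + c₀) / 2 * ‖η‖ ^ 2 ≤ (Lg + c₀) / 2 * Δ ^ 2 := by
          gcongr
      _ = (Lg + c₀) * Δ * Δ / 2 := by ring
      _ ≤ c₂ * εg * Δ / 2 := by gcongr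
      _ = 1 / 2 * (c₂ * min Δ (εg / c₀) * εg) := by rw [hmin]; ring
      _ ≤ 1 / 2 * D := by gcongr
  have hN2 : |fhat 0 - fhat η - D| ≤ 1 / 2 * D := le_trans hN hkey
  have hρ : (fhat 0 - fhat η) / D - 1 = (fhat 0 - fhat η - D) / D := by
    field_simp
  have habs : |(fhat 0 - fhat η) / D - 1| ≤ 1 / 2 := by
    rw [hρ, abs_div, abs_of_pos hDpos, div_le_iff₀ hDpos]
    linarith
  refine ⟨habs, ?_⟩
  have := abs_le.mp habs
  linarith [this.1]
end

section
/- Let E be a real inner product space, f̂ : E → ℝ, g, η ∈ E, A, H : E → E, and constants L_H ≥ 0, c₁ ≥ 0, c₃ > 0, ε_H > 0, Δ > 0. Set m(ξ) = f̂(0) + ⟪ξ, g⟫ + (1/2)⟪ξ, H(ξ)⟫. Assume: ‖η‖ ≤ Δ ≤ 3c₃ε_H/(L_H + c₁); |f̂(η) − f̂(0) − ⟪η, g⟫ − (1/2)⟪η, A(η)⟫| ≤ (L_H/6)‖η‖³; |⟪η, A(η)⟫ − ⟪η, H(η)⟫| ≤ (c₁Δ/3)‖η‖²; and m(0) − m(η)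 ≥ c₃·Δ²·ε_H. Then the ratio ρ = (f̂(0) − f̂(η))/(m(0) − m(η)) satisfies |ρ − 1| ≤ 1/2. -/
open RealInnerProductSpace

theorem stmt10 {E : Type*} [NormedAddCommGroup E] [InnerProductSpace ℝ E]
    (fhat : E → ℝ) (g η : E) (A H : E → E)
    (LH c₁ c₃ εH Δ : ℝ)
    (hLH : 0 ≤ LH) (hc₁ : 0 ≤ c₁) (hc₃ : 0 < c₃) (hεH : 0 < εH) (hΔ : 0 < Δ)
    (m : E → ℝ) (hm : ∀ ξ, m ξ = fhat 0 + ⟪ξ, g⟫ + 1 / 2 * ⟪ξ, H ξ⟫)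
    (hηΔ : ‖η‖ ≤ Δ) (hΔsmall : Δ ≤ 3 * c₃ * εH / (LH + c₁))
    (hlip : |fhat η - fhat 0 - ⟪η, g⟫ - 1 / 2 * ⟪η, A η⟫| ≤ LH / 6 * ‖η‖ ^ 3)
    (hAH : |⟪η, A η⟫ - ⟪η, H η⟫| ≤ c₁ * Δ / 3 * ‖η‖ ^ 2)
    (hdec : m 0 - m η ≥ c₃ * Δ ^ 2 * εH) :
    |(fhat 0 - fhat η) / (m 0 - m η) - 1| ≤ 1 / 2 := by
  -- L_H + c₁ must be positive
  have hsum : 0 < LH + c₁ := by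
    rcases lt_or_eq_of_le (by linarith : (0:ℝ) ≤ LH + c₁) with h | h
    · exact h
    · exfalso
      rw [← h] at hΔsmall
      simp at hΔsmall
      linarith
  have hΔ3 : (LH + c₁) * Δ ≤ 3 * c₃ * εH := by
    rw [le_div_iff₀ hsum] at hΔsmall; linarith
  have hD : 0 < m 0 - m η := lt_of_lt_of_le (by positivity) hdec
  have hm0 : m 0 = fhat 0 := by simp [hm 0]
  have hηn : 0 ≤ ‖η‖ := norm_nonneg _
  have hcube : ‖η‖ ^ 3 ≤ Δ ^ 3 := pow_le_pow_left₀ hηn hηΔ 3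
  have hsq : ‖η‖ ^ 2 ≤ Δ ^ 2 := pow_le_pow_left₀ hηn hηΔ 2
  -- numerator bound
  have hnum : |fhat 0 - fhat η - (m 0 - m η)| ≤ (m 0 - m η) / 2 := by
    have h1 : fhat 0 - fhat η - (m 0 - m η)
        = -((fhat η - fhat 0 - ⟪η, g⟫ - 1 / 2 * ⟪η, A η⟫)
            + 1 / 2 * (⟪η, A η⟫ - ⟪η, H η⟫)) := by
      rw [hm0, hm η]; ring
    rw [h1, abs_neg]
    have h2 : |(fhat η - fhat 0 - ⟪η, g⟫ - 1 / 2 * ⟪η, A η⟫)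
            + 1 / 2 * (⟪η, A η⟫ - ⟪η, H η⟫)|
        ≤ LH / 6 * ‖η‖ ^ 3 + 1 / 2 * (c₁ * Δ / 3 * ‖η‖ ^ 2) := by
      calc _ ≤ |fhat η - fhat 0 - ⟪η, g⟫ - 1 / 2 * ⟪η, A η⟫|
              + |1 / 2 * (⟪η, A η⟫ - ⟪η, H η⟫)| := abs_add_le _ _
        _ ≤ _ := by
            rw [abs_mul, abs_of_nonneg (by norm_num : (0:ℝ) ≤ 1/2)]
            gcongr
    have h3 : LH / 6 * ‖η‖ ^ 3 + 1 / 2 * (c₁ * Δ / 3 * ‖η‖ ^ 2)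
        ≤ (LH + c₁) * Δ ^ 3 / 6 := by
      have : LH / 6 * ‖η‖ ^ 3 ≤ LH / 6 * Δ ^ 3 := by gcongr
      have : c₁ * Δ / 3 * ‖η‖ ^ 2 ≤ c₁ * Δ / 3 * Δ ^ 2 := by gcongr
      nlinarith
    have h4 : (LH + c₁) * Δ ^ 3 / 6 ≤ c₃ * Δ ^ 2 * εH / 2 := by
      nlinarith [sq_nonneg Δ]
    linarith
  rw [div_sub_one (ne_of_gt hD), abs_div, abs_of_pos hD, div_le_iff₀ hD]
  linarith [hnum, (abs_le.mp (le_refl |fhat 0 - fhat η - (m 0 - m η)|))]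
end

section
/- Let f⋆ ∈ ℝ, ρ' > 0, c₂ > 0, c₀ > 0, λ_g > 0 with λ_g ≤ 1/c₀, and ε_g > 0. Let N ∈ ℕ, let φ : ℕ → ℝ and Δ : ℕ → ℝ be sequences, and let S ⊆ {0, …, N}. Assume: φ_k ≥ f⋆ for all k; φ_{k+1} = φ_k for every k ∈ {0, …, N} not in S; and for every k ∈ S, Δ_k ≥ λ_g ε_g and φ_k − φ_{k+1} ≥ ρ'·c₂·min(Δ_k, ε_g/c₀)·ε_g. Then the number of elements of S satisfies |S| ≤ (φ_0 − f⋆)/(ρ' c₂ λ_g ε_g²). -/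
theorem stmt12 (fstar ρ' c₂ c₀ lamg εg : ℝ)
    (hρ' : 0 < ρ') (hc₂ : 0 < c₂) (hc₀ : 0 < c₀) (hlamg : 0 < lamg)
    (hlamg' : lamg ≤ 1 / c₀) (hεg : 0 < εg)
    (N : ℕ) (φ Δ : ℕ → ℝ) (S : Finset ℕ) (hS : ∀ k ∈ S, k ≤ N)
    (hlb : ∀ k, fstar ≤ φ k)
    (hfail : ∀ k ≤ N, k ∉ S → φ (k + 1) = φ k)
    (hsucc : ∀ k ∈ S, Δ k ≥ lamg * εg ∧
      φ k - φ (k + 1) ≥ ρ' * c₂ * min (Δ k) (εg / c₀) * εg) :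
    (S.card : ℝ) ≤ (φ 0 - fstar) / (ρ' * c₂ * lamg * εg ^ 2) := by
  set c := ρ' * c₂ * lamg * εg ^ 2 with hcdef
  have hc : 0 < c := by positivity
  have key : ∀ k ∈ S, c ≤ φ k - φ (k + 1) := by
    intro k hk
    obtain ⟨h1, h2⟩ := hsucc k hk
    have hmin : lamg * εg ≤ min (Δ k) (εg / c₀) := by
      refine le_min h1 ?_
      have : lamg * εg ≤ (1 / c₀) * εg := by nlinarith
      linarith [this, (by field_simp : (1 / c₀) * εg = εg / c₀)]
    have h3 : ρ' * c₂ * (lamg * εg) * εg ≤ ρ' * c₂ * min (Δ k) (εg / c₀) * εg := by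
      gcongr
    calc c = ρ' * c₂ * (lamg * εg) * εg := by ring
    _ ≤ _ := le_trans h3 h2
  have hsub : S ⊆ Finset.range (N + 1) := by
    intro k hk; exact Finset.mem_range.mpr (Nat.lt_succ_of_le (hS k hk))
  have h1 : (S.card : ℝ) * c = ∑ _k ∈ S, c := by
    rw [Finset.sum_const, nsmul_eq_mul]
  have h2 : ∑ _k ∈ S, c ≤ ∑ k ∈ S, (φ k - φ (k + 1)) :=
    Finset.sum_le_sum key
  have h3 : ∑ k ∈ S, (φ k - φ (k + 1)) ≤ ∑ k ∈ Finset.range (N + 1), (φ k - φ (k + 1)) := by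
    refine Finset.sum_le_sum_of_subset_of_nonneg hsub ?_
    intro k hkr hkS
    have := hfail k (Nat.lt_succ_iff.mp (Finset.mem_range.mp hkr)) hkS
    simp [this]
  have h4 : ∑ k ∈ Finset.range (N + 1), (φ k - φ (k + 1)) = φ 0 - φ (N + 1) :=
    Finset.sum_range_sub' φ (N + 1)
  have hmain : (S.card : ℝ) * c ≤ φ 0 - fstar := by
    have := hlb (N + 1)
    linarith [h1, h2, h3, h4.le]
  rw [le_div_iff₀ hc]
  exact hmain
end

section
/- Let f⋆ ∈ ℝ, ρ' > 0, c₂ > 0, c₃ > 0, c₀ > 0, λ_g > 0, λ_H > 0, ε_g > 0, ε_H > 0, with λ_g ≤ 1/c₀, ε_g ≤ (c₂/c₃)·λ_H/λ_g², and ε_H ≤ (c₂/c₃)·(1/λ_g). Let N ∈ ℕ, φ : ℕ → ℝ, Δ : ℕ → ℝ, and S ⊆ {0, …, N}. Assume: φ_k ≥ f⋆ for all k; φ_{k+1} = φ_k for every k ∈ {0, …, N} not in S; and for every k ∈ S, Δ_k ≥ min(λ_g ε_g, λ_H ε_H) and φ_k − φ_{k+1} ≥ ρ'·min( c₂·min(Δ_k,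 ε_g/c₀)·ε_g , c₃·Δ_k²·ε_H ). Then |S| ≤ (φ_0 − f⋆)/( ρ'·c₃·min(λ_g ε_g, λ_H ε_H)²·ε_H ). -/
set_option maxHeartbeats 1000000


theorem stmt13 (fstar ρ' c₂ c₃ c₀ lamg lamH εg εH : ℝ)
    (hρ' : 0 < ρ') (hc₂ : 0 < c₂) (hc₃ : 0 < c₃) (hc₀ : 0 < c₀)
    (hlamg : 0 < lamg) (hlamH : 0 < lamH) (hεg : 0 < εg) (hεH : 0 < εH)
    (hlamg' : lamg ≤ 1 / c₀)
    (hεg' : εg ≤ (c₂ / c₃) * lamH / lamg ^ 2)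
    (hεH' : εH ≤ (c₂ / c₃) * (1 / lamg))
    (N : ℕ) (φ Δ : ℕ → ℝ) (S : Finset ℕ) (hS : ∀ k ∈ S, k ≤ N)
    (hlb : ∀ k, fstar ≤ φ k)
    (hfail : ∀ k ≤ N, k ∉ S → φ (k + 1) = φ k)
    (hsucc : ∀ k ∈ S, Δ k ≥ min (lamg * εg) (lamH * εH) ∧
      φ k - φ (k + 1) ≥
        ρ' * min (c₂ * min (Δ k) (εg / c₀) * εg) (c₃ * (Δ k) ^ 2 * εH)) :
    (S.card : ℝ) ≤ (φ 0 - fstar) / (ρ' * c₃ * (min (lamg * εg) (lamH * εH)) ^ 2 * εH) := by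
  set m : ℝ := min (lamg * εg) (lamH * εH) with hm
  have hmpos : 0 < m := lt_min (by positivity) (by positivity)
  have hmleg : m ≤ lamg * εg := min_le_left _ _
  clear_value m
  set δ : ℝ := ρ' * c₃ * m ^ 2 * εH with hδ
  have hδpos : 0 < δ := by positivity
  clear_value δ
  -- per-step decrease ≥ δ on success
  have hstep : ∀ k ∈ S, δ ≤ φ k - φ (k + 1) := by
    intro k hk
    obtain ⟨hΔ, hdec⟩ := hsucc k hk
    refine le_trans ?_ hdec
    have hΔpos : 0 < Δ k := lt_of_lt_of_le hmpos hΔ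
    have hmle := hmleg
    have h2 : c₃ * m ^ 2 * εH ≤ c₃ * (Δ k) ^ 2 * εH := by
      have hsq : m ^ 2 ≤ (Δ k) ^ 2 := by nlinarith
      have := mul_le_mul_of_nonneg_right (mul_le_mul_of_nonneg_left hsq hc₃.le) hεH.le
      linarith
    have h1 : c₃ * m ^ 2 * εH ≤ c₂ * min (Δ k) (εg / c₀) * εg := by
      have hε : εg / c₀ ≥ lamg * εg := by
        rw [ge_iff_le, div_eq_mul_inv]
        have : lamg ≤ c₀⁻¹ := by rwa [one_div] at hlamg'
        nlinarith
      have hmin : m ≤ min (Δ k) (εg / c₀) :=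
        le_min hΔ (le_trans hmle hε)
      -- c₃ * m * εH ≤ c₂ * εg  since m ≤ lamg * εg and εH ≤ (c₂/c₃)/lamg
      have key : c₃ * m * εH ≤ c₂ * εg := by
        have h' : lamg * εH ≤ c₂ / c₃ := by
          have := hεH'
          rw [mul_one_div] at this
          calc lamg * εH ≤ lamg * (c₂ / c₃ / lamg) := by nlinarith
            _ = c₂ / c₃ := by field_simp
        have : c₃ * (lamg * εg) * εH ≤ c₂ * εg := by
          have := mul_le_mul_of_nonneg_left h' (le_of_lt hc₃)
          rw [mul_div_cancel₀ _ (ne_of_gt hc₃)] at this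
          nlinarith
        have hmono := mul_le_mul_of_nonneg_left hmle (mul_pos hc₃ hεH).le
        nlinarith
      calc c₃ * m ^ 2 * εH = (c₃ * m * εH) * m := by ring
        _ ≤ (c₂ * εg) * min (Δ k) (εg / c₀) := by
            apply mul_le_mul key hmin (le_of_lt hmpos)
            positivity
        _ = c₂ * min (Δ k) (εg / c₀) * εg := by ring
    have := le_min h1 h2
    calc δ = ρ' * (c₃ * m ^ 2 * εH) := by rw [hδ]; ring
      _ ≤ ρ' * min (c₂ * min (Δ k) (εg / c₀) * εg) (c₃ * (Δ k) ^ 2 * εH) :=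
        mul_le_mul_of_nonneg_left this (le_of_lt hρ')
  -- monotone accumulation
  have hacc : ∀ n, n ≤ N + 1 → ((S ∩ Finset.range n).card : ℝ) * δ ≤ φ 0 - φ n := by
    intro n
    induction n with
    | zero => intro _; simp
    | succ n ih =>
      intro hn
      have hn' : n ≤ N := Nat.lt_succ_iff.mp hn
      have ihh := ih (le_trans (Nat.le_succ n) hn)
      by_cases hnS : n ∈ S
      · have : S ∩ Finset.range (n + 1) = insert n (S ∩ Finset.range n) := by
          ext x
          simp only [Finset.mem_inter, Finset.mem_range, Finset.mem_insert, Nat.lt_succ_iff]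
          constructor
          · rintro ⟨hx, hx'⟩
            rcases lt_or_eq_of_le hx' with h | h
            · exact Or.inr ⟨hx, h⟩
            · exact Or.inl h
          · rintro (rfl | ⟨hx, hx'⟩)
            · exact ⟨hnS, le_refl _⟩
            · exact ⟨hx, le_of_lt hx'⟩
        rw [this, Finset.card_insert_of_notMem (by simp)]
        push_cast
        have hst := hstep n hnS
        nlinarith [ihh, (by positivity : (0:ℝ) ≤ ((S ∩ Finset.range n).card : ℝ)), hδpos]
      · have : S ∩ Finset.range (n + 1) = S ∩ Finset.range n := by
          ext x
          simp only [Finset.mem_inter, Finset.mem_range, Nat.lt_succ_iff]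
          constructor
          · rintro ⟨hx, hx'⟩
            refine ⟨hx, lt_of_le_of_ne hx' ?_⟩
            rintro rfl; exact hnS hx
          · rintro ⟨hx, hx'⟩; exact ⟨hx, le_of_lt hx'⟩
        rw [this, hfail n hn' hnS]
        exact ihh
  have hScap : S ∩ Finset.range (N + 1) = S := by
    ext x
    simp only [Finset.mem_inter, Finset.mem_range, Nat.lt_succ_iff]
    exact ⟨fun h => h.1, fun h => ⟨h, hS x h⟩⟩
  have hfin := hacc (N + 1) le_rfl
  rw [hScap] at hfin
  rw [le_div_iff₀ hδpos]
  have := hlb (N + 1)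
  linarith
end

section
/- Let Δ : ℕ → ℝ be a sequence of positive reals with Δ_0 > 0, let c > 0, and let N ∈ ℕ. Let S ⊆ {0, …, N} and U = {0, …, N} \ S. Assume Δ_{k+1} ≤ 2Δ_k for every k ∈ S, Δ_{k+1} ≤ Δ_k/4 for every k ∈ U, and Δ_{N+1} ≥ min(Δ_0, c). Then |S| ≥ (2/3)(N + 1) − (1/3)·max(0, log₂(Δ_0/c)). -/
theorem stmt14 (Δ : ℕ → ℝ) (hpos : ∀ k, 0 < Δ k) (c : ℝ) (hc : 0 < c) (N : ℕ)
    (S : Finset ℕ) (hS : S ⊆ Finset.range (N + 1))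
    (hsucc : ∀ k ∈ S, Δ (k + 1) ≤ 2 * Δ k)
    (hfail : ∀ k ∈ Finset.range (N + 1) \ S, Δ (k + 1) ≤ Δ k / 4)
    (hfinal : Δ (N + 1) ≥ min (Δ 0) c) :
    (S.card : ℝ) ≥ 2 / 3 * (N + 1) - 1 / 3 * max 0 (Real.logb 2 (Δ 0 / c)) := by
  -- key inductive inequality
  have key : ∀ n, n ≤ N + 1 →
      Δ n * 4 ^ (n - (S ∩ Finset.range n).card) ≤ Δ 0 * 2 ^ (S ∩ Finset.range n).card := by
    intro n
    induction n with
    | zero => intro _; simp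
    | succ n ih =>
      intro hn
      have hn' : n ≤ N + 1 := Nat.le_of_succ_le hn
      have IH := ih hn'
      set sn := (S ∩ Finset.range n).card with hsn
      have hsle : sn ≤ n := by
        calc sn ≤ (Finset.range n).card := Finset.card_le_card (Finset.inter_subset_right)
        _ = n := Finset.card_range n
      have hrange : Finset.range (n + 1) = insert n (Finset.range n) := Finset.range_add_one
      by_cases hmem : n ∈ S
      · have hcard : (S ∩ Finset.range (n + 1)).card = sn + 1 := by
          rw [hrange, Finset.inter_insert_of_mem hmem]
          rw [Finset.card_insert_of_notMem (by simp)]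
        have hstep := hsucc n hmem
        have hsub : n + 1 - (sn + 1) = n - sn := by omega
        rw [hcard, hsub]
        calc Δ (n + 1) * 4 ^ (n - sn) ≤ (2 * Δ n) * 4 ^ (n - sn) := by
              apply mul_le_mul_of_nonneg_right hstep (by positivity)
          _ = 2 * (Δ n * 4 ^ (n - sn)) := by ring
          _ ≤ 2 * (Δ 0 * 2 ^ sn) := by linarith
          _ = Δ 0 * 2 ^ (sn + 1) := by ring
      · have hcard : (S ∩ Finset.range (n + 1)).card = sn := by
          rw [hrange, Finset.inter_insert_of_notMem hmem]
        have hstep := hfail n (by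
          simp only [Finset.mem_sdiff, Finset.mem_range]
          exact ⟨by omega, hmem⟩)
        have hsub : n + 1 - sn = (n - sn) + 1 := by omega
        rw [hcard, hsub]
        calc Δ (n + 1) * 4 ^ ((n - sn) + 1) = (Δ (n + 1) * 4) * 4 ^ (n - sn) := by ring
          _ ≤ Δ n * 4 ^ (n - sn) := by
              apply mul_le_mul_of_nonneg_right _ (by positivity)
              linarith
          _ ≤ Δ 0 * 2 ^ sn := IH
  have hSeq : S ∩ Finset.range (N + 1) = S := Finset.inter_eq_left.mpr hS
  have hkey := key (N + 1) le_rfl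
  rw [hSeq] at hkey
  set s := S.card with hs
  have hsle : s ≤ N + 1 := by
    calc s ≤ (Finset.range (N + 1)).card := Finset.card_le_card hS
    _ = N + 1 := Finset.card_range _
  set u := N + 1 - s with hu
  have hucast : (u : ℝ) = (N : ℝ) + 1 - s := by
    push_cast [hu, Nat.cast_sub hsle]
    ring
  have hmain : min (Δ 0) c * 4 ^ u ≤ Δ 0 * 2 ^ s := by
    calc min (Δ 0) c * 4 ^ u ≤ Δ (N + 1) * 4 ^ u := by
          apply mul_le_mul_of_nonneg_right hfinal (by positivity)
      _ ≤ Δ 0 * 2 ^ s := hkey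
  have hmax : (0:ℝ) ≤ max 0 (Real.logb 2 (Δ 0 / c)) := le_max_left _ _
  -- suffices: 2*(N+1) - 3*s ≤ max 0 (logb 2 (Δ0/c))
  have hsuff : 2 * ((N:ℝ) + 1) - 3 * s ≤ max 0 (Real.logb 2 (Δ 0 / c)) := by
    rcases le_or_gt (Δ 0) c with hle | hlt
    · -- min = Δ0, get 4^u ≤ 2^s, so 2u ≤ s
      rw [min_eq_left hle] at hmain
      have h4 : (4:ℝ) ^ u ≤ 2 ^ s := by
        have h0 := (hpos 0)
        nlinarith [pow_pos (show (0:ℝ) < 4 by norm_num) u, pow_pos (show (0:ℝ) < 2 by norm_num) s]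
      have h4' : (2:ℝ) ^ (2 * u) ≤ 2 ^ s := by
        calc (2:ℝ) ^ (2 * u) = 4 ^ u := by rw [pow_mul]; norm_num
        _ ≤ 2 ^ s := h4
      have hus : 2 * u ≤ s := by
        exact (pow_le_pow_iff_right₀ (by norm_num : (1:ℝ) < 2)).mp h4'
      have : (2:ℝ) * u ≤ s := by exact_mod_cast hus
      have h2 : 2 * ((N:ℝ) + 1) - 3 * s ≤ 0 := by
        rw [hucast] at this; linarith
      linarith
    · -- min = c
      rw [min_eq_right hlt.le] at hmain
      have hmain' : (2:ℝ) ^ (2 * u) ≤ 2 ^ s * (Δ 0 / c) := by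
        have : (2:ℝ) ^ (2 * u) = 4 ^ u := by rw [pow_mul]; norm_num
        rw [this]
        rw [show (2:ℝ) ^ s * (Δ 0 / c) = 2 ^ s * Δ 0 / c by ring, le_div_iff₀ hc]
        nlinarith [pow_pos (show (0:ℝ) < 4 by norm_num) u]
      have hlog := Real.logb_le_logb_of_le (b := 2) (by norm_num)
        (by positivity) hmain'
      have h22 : Real.logb 2 2 = 1 := Real.logb_self_eq_one (by norm_num)
      rw [Real.logb_pow, Real.logb_mul (by positivity) (by have := hpos 0; positivity), Real.logb_pow,
        h22] at hlog
      have hfin : 2 * (u:ℝ) - s ≤ Real.logb 2 (Δ 0 / c) := by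
        push_cast at hlog ⊢
        linarith
      rw [hucast] at hfin
      calc 2 * ((N:ℝ) + 1) - 3 * s ≤ Real.logb 2 (Δ 0 / c) := by linarith
        _ ≤ max 0 _ := le_max_right _ _
  linarith
end

section
/- Let f⋆ ∈ ℝ, ρ' > 0, c₂ > 0, λ_g > 0, ε_g > 0, Δ_0 > 0 with λ_g ε_g ≤ Δ_0. Let N ∈ ℕ, φ : ℕ → ℝ, Δ : ℕ → ℝ with Δ(0) = Δ_0 and Δ_k > 0 for all k, and S ⊆ {0, …, N}. Assume: φ_k ≥ f⋆ for all k; for every k ∈ S, φ_k − φ_{k+1} ≥ ρ'·c₂·λ_g·ε_g² and Δ_{k+1} ≤ 2Δ_k; for every k ∈ {0, …, N} not in S, φ_{k+1} = φ_k and Δ_{k+1} ≤ Δ_k/4; and Δ_{N+1} ≥ λ_g ε_g. Then N + 1 ≤ (3/2)·(φ_0 − f⋆)/(ρ' c₂ λ_g ε_g²) + (1/2)·log₂(Δ_0/(λ_g ε_g)). -/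
theorem stmt15 (fstar ρ' c₂ lamg εg Δ₀ : ℝ)
    (hρ' : 0 < ρ') (hc₂ : 0 < c₂) (hlamg : 0 < lamg) (hεg : 0 < εg) (hΔ₀ : 0 < Δ₀)
    (hinit : lamg * εg ≤ Δ₀)
    (N : ℕ) (φ Δ : ℕ → ℝ) (hΔ0 : Δ 0 = Δ₀) (hpos : ∀ k, 0 < Δ k)
    (S : Finset ℕ) (hS : ∀ k ∈ S, k ≤ N)
    (hlb : ∀ k, fstar ≤ φ k)
    (hsucc : ∀ k ∈ S, φ k - φ (k + 1) ≥ ρ' * c₂ * lamg * εg ^ 2 ∧ Δ (k + 1) ≤ 2 * Δ k)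
    (hfail : ∀ k ≤ N, k ∉ S → φ (k + 1) = φ k ∧ Δ (k + 1) ≤ Δ k / 4)
    (hfinal : Δ (N + 1) ≥ lamg * εg) :
    (N + 1 : ℝ) ≤ 3 / 2 * (φ 0 - fstar) / (ρ' * c₂ * lamg * εg ^ 2)
      + 1 / 2 * Real.logb 2 (Δ₀ / (lamg * εg)) := by
  set δ := ρ' * c₂ * lamg * εg ^ 2 with hδdef
  have hδ : 0 < δ := by positivity
  have hSsub : S ⊆ Finset.range (N + 1) := fun k hk =>
    Finset.mem_range.mpr (Nat.lt_succ_of_le (hS k hk))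
  -- Claim 1: total decrease
  have hsum : φ 0 - φ (N + 1) = ∑ k ∈ Finset.range (N + 1), (φ k - φ (k + 1)) :=
    (Finset.sum_range_sub' φ (N + 1)).symm
  have hterm : ∀ k ∈ Finset.range (N + 1),
      (if k ∈ S then δ else 0) ≤ φ k - φ (k + 1) := by
    intro k hk
    by_cases h : k ∈ S
    · simpa [h] using (hsucc k h).1
    · have := (hfail k (Nat.lt_succ_iff.mp (Finset.mem_range.mp hk)) h).1
      simp [h, this]
  have hcard : (S.card : ℝ) * δ ≤ φ 0 - φ (N + 1) := by
    rw [hsum]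
    calc (S.card : ℝ) * δ
        = ∑ k ∈ Finset.range (N + 1), (if k ∈ S then δ else 0) := by
          rw [Finset.sum_ite_mem, Finset.inter_eq_right.mpr hSsub,
            Finset.sum_const, nsmul_eq_mul]
      _ ≤ ∑ k ∈ Finset.range (N + 1), (φ k - φ (k + 1)) :=
          Finset.sum_le_sum hterm
  -- Claim 2: radius bound
  have hΔbound : ∀ n, n ≤ N + 1 →
      Δ n ≤ Δ₀ * 8 ^ ((S ∩ Finset.range n).card) / 4 ^ n := by
    intro n
    induction n with
    | zero => intro _; simp [hΔ0]
    | succ n ih =>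
      intro hn
      have hn' : n ≤ N := Nat.succ_le_succ_iff.mp hn
      have ihn := ih (Nat.le_succ_of_le hn')
      by_cases h : n ∈ S
      · have hcard' : (S ∩ Finset.range (n + 1)).card
            = (S ∩ Finset.range n).card + 1 := by
          rw [Finset.range_add_one, Finset.inter_insert_of_mem h,
            Finset.card_insert_of_notMem (by simp)]
        have h2 : Δ (n + 1) ≤ 2 * Δ n := (hsucc n h).2
        have heq : Δ₀ * 8 ^ ((S ∩ Finset.range n).card + 1) / 4 ^ (n + 1)
            = 2 * (Δ₀ * 8 ^ ((S ∩ Finset.range n).card) / 4 ^ n) := by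
          rw [pow_succ, pow_succ]; ring
        rw [hcard', heq]
        linarith
      · have hcard' : (S ∩ Finset.range (n + 1)).card
            = (S ∩ Finset.range n).card := by
          rw [Finset.range_add_one, Finset.inter_insert_of_notMem h]
        have h2 : Δ (n + 1) ≤ Δ n / 4 := (hfail n hn' h).2
        rw [hcard']
        have heq : Δ₀ * 8 ^ ((S ∩ Finset.range n).card) / 4 ^ (n + 1)
            = (Δ₀ * 8 ^ ((S ∩ Finset.range n).card) / 4 ^ n) / 4 := by
          rw [pow_succ]; ring
        rw [heq]
        linarith
  have hfin := hΔbound (N + 1) le_rfl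
  rw [Finset.inter_eq_left.mpr hSsub] at hfin
  set s := S.card with hsdef
  have hle : lamg * εg ≤ Δ₀ * 8 ^ s / 4 ^ (N + 1) := le_trans hfinal hfin
  have hεpos : 0 < lamg * εg := by positivity
  have h4 : (4 : ℝ) ^ (N + 1) ≤ Δ₀ / (lamg * εg) * 8 ^ s := by
    rw [div_mul_eq_mul_div, le_div_iff₀ hεpos]
    calc (4 : ℝ) ^ (N + 1) * (lamg * εg)
        ≤ (4 : ℝ) ^ (N + 1) * (Δ₀ * 8 ^ s / 4 ^ (N + 1)) := by
          apply mul_le_mul_of_nonneg_left hle (by positivity)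
      _ = Δ₀ * 8 ^ s := by field_simp
  -- take logs
  have hlog := Real.logb_le_logb_of_le (by norm_num : (1:ℝ) < 2) (by positivity) h4
  have hl4 : Real.logb 2 ((4 : ℝ) ^ (N + 1)) = 2 * (N + 1) := by
    rw [show (4 : ℝ) = 2 ^ 2 by norm_num, ← pow_mul, Real.logb_pow,
      Real.logb_self_eq_one (by norm_num : (1:ℝ) < 2)]
    push_cast; ring
  have hl8 : Real.logb 2 (Δ₀ / (lamg * εg) * 8 ^ s)
      = Real.logb 2 (Δ₀ / (lamg * εg)) + 3 * s := by
    rw [Real.logb_mul (by positivity) (by positivity),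
      show (8 : ℝ) = 2 ^ 3 by norm_num, ← pow_mul, Real.logb_pow,
      Real.logb_self_eq_one (by norm_num : (1:ℝ) < 2)]
    push_cast; ring
  rw [hl4, hl8] at hlog
  -- combine
  have hs : (s : ℝ) ≤ (φ 0 - fstar) / δ := by
    rw [le_div_iff₀ hδ]
    have := hlb (N + 1)
    linarith
  have hgoal : (N + 1 : ℝ) ≤ 3 / 2 * ((φ 0 - fstar) / δ)
      + 1 / 2 * Real.logb 2 (Δ₀ / (lamg * εg)) := by linarith
  calc (N + 1 : ℝ) ≤ _ := hgoal
    _ = 3 / 2 * (φ 0 - fstar) / δ + 1 / 2 * Real.logb 2 (Δ₀ / (lamg * εg)) := by ring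
end

section
/- Let f⋆ ∈ ℝ, ρ' > 0, c₃ > 0, ε_H > 0, Δ_0 > 0, and c > 0 with c ≤ Δ_0. Let N ∈ ℕ, φ : ℕ → ℝ, Δ : ℕ → ℝ with Δ(0) = Δ_0 and Δ_k > 0 for all k, and S ⊆ {0, …, N}. Assume: φ_k ≥ f⋆ for all k; for every k ∈ S, φ_k − φ_{k+1} ≥ ρ'·c₃·c²·ε_H and Δ_{k+1} ≤ 2Δ_k; for every k ∈ {0, …, N} not in S, φ_{k+1} = φ_k and Δ_{k+1} ≤ Δ_k/4; and Δ_{N+1} ≥ c. Then N + 1 ≤ (3/2)·(φ_0 − f⋆)/(ρ' c₃ c² ε_H) + (1/2)·log₂(Δ_0/c). -/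
theorem stmt16 (fstar ρ' c₃ εH Δ₀ c : ℝ)
    (hρ' : 0 < ρ') (hc₃ : 0 < c₃) (hεH : 0 < εH) (hΔ₀ : 0 < Δ₀)
    (hc : 0 < c) (hcΔ₀ : c ≤ Δ₀)
    (N : ℕ) (φ Δ : ℕ → ℝ) (hΔ0 : Δ 0 = Δ₀) (hpos : ∀ k, 0 < Δ k)
    (S : Finset ℕ) (hS : ∀ k ∈ S, k ≤ N)
    (hlb : ∀ k, fstar ≤ φ k)
    (hsucc : ∀ k ∈ S, φ k - φ (k + 1) ≥ ρ' * c₃ * c ^ 2 * εH ∧ Δ (k + 1) ≤ 2 * Δ k)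
    (hfail : ∀ k ≤ N, k ∉ S → φ (k + 1) = φ k ∧ Δ (k + 1) ≤ Δ k / 4)
    (hfinal : Δ (N + 1) ≥ c) :
    (N + 1 : ℝ) ≤ 3 / 2 * (φ 0 - fstar) / (ρ' * c₃ * c ^ 2 * εH)
      + 1 / 2 * Real.logb 2 (Δ₀ / c) := by
  classical
  set d := ρ' * c₃ * c ^ 2 * εH with hd
  have hdpos : 0 < d := by positivity
  set s : ℕ → ℕ := fun k => ((Finset.range k).filter (· ∈ S)).card with hs
  have hsle : ∀ k, s k ≤ k := fun k =>
    (Finset.card_filter_le _ _).trans (by simp)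
  have hstep : ∀ k, s (k + 1) = if k ∈ S then s k + 1 else s k := by
    intro k
    simp only [hs, Finset.range_add_one, Finset.filter_insert]
    split
    · rw [Finset.card_insert_of_notMem (by simp)]
    · rfl
  have key : ∀ k, k ≤ N + 1 →
      (s k : ℝ) * d ≤ φ 0 - φ k ∧ Δ k * 4 ^ (k - s k) ≤ Δ₀ * 2 ^ (s k) := by
    intro k
    induction k with
    | zero => intro _; simp [hs, hΔ0]
    | succ k ih =>
      intro hk
      have hkN : k ≤ N := Nat.lt_succ_iff.mp hk
      obtain ⟨ih1, ih2⟩ := ih (le_trans (Nat.le_succ k) hk)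
      have h4 : (0:ℝ) < 4 ^ (k - s k) := by positivity
      by_cases hkS : k ∈ S
      · obtain ⟨h1, h2⟩ := hsucc k hkS
        rw [hstep k, if_pos hkS]
        constructor
        · push_cast; nlinarith
        · have hsub : (k + 1) - (s k + 1) = k - s k := by omega
          rw [hsub, pow_succ]
          nlinarith [hpos k]
      · obtain ⟨h1, h2⟩ := hfail k hkN hkS
        rw [hstep k, if_neg hkS]
        constructor
        · rw [h1]; exact ih1
        · have hsub : (k + 1) - s k = (k - s k) + 1 := by
            have := hsle k; omega
          rw [hsub, pow_succ]
          nlinarith [hpos (k + 1), hpos k]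
  obtain ⟨h1, h2⟩ := key (N + 1) le_rfl
  set m := s (N + 1) with hm
  set u := (N + 1) - m with hu
  have hmN : m ≤ N + 1 := hsle (N + 1)
  -- radius bound gives c * 4^u ≤ Δ₀ * 2^m
  have hrad : c * 4 ^ u ≤ Δ₀ * 2 ^ m := by
    have h4 : (0:ℝ) < 4 ^ u := by positivity
    nlinarith [hfinal]
  -- take log base 2
  have hlog : (2 * u : ℝ) - m ≤ Real.logb 2 (Δ₀ / c) := by
    have hlhs : (0:ℝ) < c * 4 ^ u := by positivity
    have hle : Real.logb 2 (c * 4 ^ u) ≤ Real.logb 2 (Δ₀ * 2 ^ m) :=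
      Real.logb_le_logb_of_le (by norm_num) hlhs hrad
    have e1 : Real.logb 2 (c * 4 ^ u) = Real.logb 2 c + 2 * u := by
      rw [Real.logb_mul (ne_of_gt hc) (by positivity)]
      have : ((4:ℝ)) = 2 ^ 2 := by norm_num
      rw [this, ← pow_mul, Real.logb_pow]
      have : Real.logb 2 2 = 1 := Real.logb_self_eq_one (by norm_num)
      push_cast
      rw [this]; ring
    have e2 : Real.logb 2 (Δ₀ * 2 ^ m) = Real.logb 2 Δ₀ + m := by
      rw [Real.logb_mul (ne_of_gt hΔ₀) (by positivity), Real.logb_pow]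
      have : Real.logb 2 2 = 1 := Real.logb_self_eq_one (by norm_num)
      rw [this]; ring
    have e3 : Real.logb 2 (Δ₀ / c) = Real.logb 2 Δ₀ - Real.logb 2 c :=
      Real.logb_div (ne_of_gt hΔ₀) (ne_of_gt hc)
    rw [e1, e2] at hle
    rw [e3]; linarith
  have hφ : (m : ℝ) * d ≤ φ 0 - fstar := by linarith [hlb (N + 1)]
  have hmdiv : (m : ℝ) ≤ (φ 0 - fstar) / d := by
    rw [le_div_iff₀ hdpos]; exact hφ
  have hsum : (N + 1 : ℝ) = (m : ℝ) + u := by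
    have h : m + u = N + 1 := by omega
    have := congrArg (fun n : ℕ => (n : ℝ)) h
    push_cast at this
    linarith
  rw [hsum]
  have hgoal : 3 / 2 * (φ 0 - fstar) / d = 3 / 2 * ((φ 0 - fstar) / d) := by ring
  rw [hgoal]
  linarith [hmdiv, hlog]
end
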